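/- Let w be a stable word of length at least 3 and p ∈ ℤ. Then f18(Σ̃(w,p)) ⊆ Σ̃(f18(w), p+1). If moreover w is not of the form 0^α (10)^n 1^β with α, β ∈ {0,1} and n ∈ ℕ, then f18(Σ̃(w,p)) = Σ̃(f18(w), p+1). -/

import Mathlib

open Filter MeasureTheory

/-- The local rule of ECA 18. -/
def rule18 (a b c : Bool) : Bool := (!a && !b && c) || (a && !b && !c)

/-- The local rule of ECA 90. -/
def rule90 (a _b c : Bool) : Bool := xor a c

/-- ECA 18 acting on configurations. -/
def f18C (x : ℤ → Bool) : ℤ → Bool := fun i => rule18 (x (i - 1)) (x i) (x (i + 1))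

/-- ECA 90 acting on configurations. -/
def f90C (x : ℤ → Bool) : ℤ → Bool := fun i => rule90 (x (i - 1)) (x i) (x (i + 1))

/-- Applying a radius-1 local rule to a finite word (shortens it by 2). -/
def mapWord (R : Bool → Bool → Bool → Bool) (w : List Bool) : List Bool :=
  (List.range (w.length - 2)).map fun i =>
    R (w.getD i false) (w.getD (i + 1) false) (w.getD (i + 2) false)

/-- ECA 18 acting on finite words. -/
def f18W : List Bool → List Bool := mapWord rule18

/-- ECA 90 acting on finite words. -/
def f90W : List Bool → List Bool := mapWord rule90

/-- The kink `1 0^(2k) 1`. -/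
def kinkWord (k : ℕ) : List Bool := true :: (List.replicate (2 * k) false ++ [true])

/-- A kink occurs in the word `w` at position `i`. -/
def kinkAtW (w : List Bool) (i : ℕ) : Prop :=
  ∃ k, (w.drop i).take (2 * k + 2) = kinkWord k

/-- The number of kinks in a finite word: the number of positions where a kink occurs. -/
noncomputable def kinkCount (w : List Bool) : ℕ := {i : ℕ | kinkAtW w i}.ncard

/-- A kink occurs in the configuration `x` at position `i`. -/
def kinkAtC (x : ℤ → Bool) (i : ℤ) : Prop :=
  ∃ k, ∀ j : ℕ, j < 2 * k + 2 → x (i + j) = (kinkWord k).getD j false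

/-- The configuration `x` contains exactly `m` kinks: the set of positions where a kink
occurs is finite of cardinality `m` (equivalently, `g_x(n)` tends to `m`). -/
def configKinks (x : ℤ → Bool) (m : ℕ) : Prop :=
  {i : ℤ | kinkAtC x i}.Finite ∧ {i : ℤ | kinkAtC x i}.ncard = m

/-- Left unstable words: the regular language `(ε+0)(10)^* 11 (0+1)^*`. -/
def leftUnstable (w : List Bool) : Prop :=
  ∃ z t : List Bool, ∃ n : ℕ, (z = [] ∨ z = [false]) ∧
    w = z ++ (List.replicate n [true, false]).flatten ++ [true, true] ++ t

/-- Right unstable words: the regular language `(0+1)^* 11 (01)^* (ε+0)`. -/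
def rightUnstable (w : List Bool) : Prop :=
  ∃ z s : List Bool, ∃ n : ℕ, (z = [] ∨ z = [false]) ∧
    w = s ++ [true, true] ++ (List.replicate n [false, true]).flatten ++ z

/-- Stable words: those that are neither left nor right unstable. -/
def stable (w : List Bool) : Prop := ¬ (leftUnstable w ∨ rightUnstable w)

/-- The finite extension `Σ(w)`: words `a ++ w ++ b` with the same number of kinks as `w`. -/
def extW (w : List Bool) : Set (List Bool) :=
  {u | (∃ a b : List Bool, u = a ++ w ++ b) ∧ kinkCount u = kinkCount w}

/-- The extension `Σ̃(w, p)`: configurations containing `w` at position `p`,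
with the same number of kinks as `w`. -/
def extC (w : List Bool) (p : ℤ) : Set (ℤ → Bool) :=
  {x | (∀ j : ℕ, j < w.length → x (p + j) = w.getD j false) ∧ configKinks x (kinkCount w)}

/-- The cylinder set `[w]_i`. -/
def cyl (w : List Bool) (i : ℤ) : Set (ℤ → Bool) :=
  {x | ∀ j : ℕ, j < w.length → x (i + j) = w.getD j false}

/-- Words of the exceptional form `0^α (10)^n 1^β` with `α, β ∈ {0,1}`. -/
def specialForm (w : List Bool) : Prop :=
  ∃ z₁ z₂ : List Bool, ∃ n : ℕ, (z₁ = [] ∨ z₁ = [false]) ∧ (z₂ = [] ∨ z₂ = [true]) ∧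
    w = z₁ ++ (List.replicate n [true, false]).flatten ++ z₂

/-! ### Basic rule lemmas -/

lemma r18_true_iff (a b c : Bool) : rule18 a b c = true ↔ b = false ∧ a ≠ c := by
  cases a <;> cases b <;> cases c <;> simp [rule18]

lemma r18_mid_true (a c : Bool) : rule18 a true c = false := by
  cases a <;> cases c <;> simp [rule18]

lemma r18_mid_false (a c : Bool) : rule18 a false c = xor a c := by
  cases a <;> cases c <;> simp [rule18]

lemma r18_symm (a b c : Bool) : rule18 a b c = rule18 c b a := by
  cases a <;> cases b <;> cases c <;> simp [rule18]

/-! ### kinkWord -/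

lemma kinkWord_length (k : ℕ) : (kinkWord k).length = 2 * k + 2 := by
  simp [kinkWord]

lemma kinkWord_getD (k j : ℕ) :
    (kinkWord k).getD j false = decide (j = 0 ∨ j = 2 * k + 1) := by
  rcases j with _ | j
  · simp [kinkWord]
  · rw [kinkWord, List.getD_cons_succ]
    by_cases hj : j < 2 * k + 1
    · rw [List.getD_eq_getElem _ _ (by simp; omega)]
      by_cases hj2 : j < 2 * k
      · rw [List.getElem_append_left (by simpa using hj2)]
        rw [List.getElem_replicate]
        simp; omega
      · have hj3 : j = 2 * k := by omega
        subst hj3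
        rw [List.getElem_append_right (by simp)]
        simp
    · rw [List.getD_eq_default _ _ (by simp; omega)]
      simp; omega

/-! ### adjacent-ones characterizations -/

def adjK (x : ℤ → Bool) (i b : ℤ) : Prop :=
  i < b ∧ (b - i) % 2 = 1 ∧ x i = true ∧ x b = true ∧ ∀ t, i < t → t < b → x t = false

def wAdj (w : List Bool) (i b : ℕ) : Prop :=
  i < b ∧ b < w.length ∧ (b - i) % 2 = 1 ∧ w.getD i false = true ∧ w.getD b false = true ∧
    ∀ t, i < t → t < b → w.getD t false = false

lemma kinkAtC_iff (x : ℤ → Bool) (i : ℤ) : kinkAtC x i ↔ ∃ b, adjK x i b := by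
  constructor
  · rintro ⟨k, h⟩
    refine ⟨i + (2 * k + 1), ?_, ?_, ?_, ?_, ?_⟩
    · omega
    · omega
    · have := h 0 (by omega)
      rw [kinkWord_getD] at this
      simpa using this
    · have := h (2 * k + 1) (by omega)
      rw [kinkWord_getD] at this
      simpa using this
    · intro t h1 h2
      have hj : t = i + ((t - i).toNat : ℤ) := by omega
      have := h (t - i).toNat (by omega)
      rw [kinkWord_getD] at this
      rw [hj, this]
      simp; omega
  · rintro ⟨b, hlt, hpar, hi, hb, hmid⟩
    refine ⟨((b - i).toNat - 1) / 2, ?_⟩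
    intro j hj
    rw [kinkWord_getD]
    have hbi : (b - i).toNat = 2 * (((b - i).toNat - 1) / 2) + 1 := by omega
    by_cases hj0 : j = 0
    · subst hj0; simpa using hi
    by_cases hje : (j : ℤ) = b - i
    · have hib : i + (j : ℤ) = b := by omega
      rw [hib, hb]
      have : j = 0 ∨ j = 2 * (((b - i).toNat - 1) / 2) + 1 := by omega
      simp [this]
    · rw [hmid (i + (j : ℤ)) (by omega) (by omega)]
      have : ¬ (j = 0 ∨ j = 2 * (((b - i).toNat - 1) / 2) + 1) := by omega
      exact (decide_eq_false this).symm

lemma kinkAtW_iff (w : List Bool) (i : ℕ) : kinkAtW w i ↔ ∃ b, wAdj w i b := by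
  constructor
  · rintro ⟨k, h⟩
    have hlen : ((w.drop i).take (2 * k + 2)).length = 2 * k + 2 := by
      rw [h, kinkWord_length]
    have hlen2 : i + (2 * k + 2) ≤ w.length := by
      simp [List.length_take, List.length_drop] at hlen; omega
    have hval : ∀ j, j < 2 * k + 2 → w.getD (i + j) false = decide (j = 0 ∨ j = 2 * k + 1) := by
      intro j hj
      have h1 : ((w.drop i).take (2 * k + 2)).getD j false = w.getD (i + j) false := by
        rw [List.getD_eq_getElem _ _ (by omega : j < ((w.drop i).take (2*k+2)).length)]
        rw [List.getElem_take, List.getElem_drop]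
        rw [List.getD_eq_getElem _ _ (by omega)]
      rw [← h1, h, kinkWord_getD]
    refine ⟨i + (2 * k + 1), by omega, by omega, by omega, ?_, ?_, ?_⟩
    · have := hval 0 (by omega); simpa using this
    · have := hval (2 * k + 1) (by omega); simpa using this
    · intro t h1 h2
      have := hval (t - i) (by omega)
      have ht : i + (t - i) = t := by omega
      rw [ht] at this
      rw [this]; simp; omega
  · rintro ⟨b, hlt, hblen, hpar, hi, hb, hmid⟩
    refine ⟨(b - i - 1) / 2, ?_⟩
    have hk : 2 * ((b - i - 1) / 2) + 1 = b - i := by omega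
    apply List.ext_getElem
    · rw [kinkWord_length]
      simp [List.length_take, List.length_drop]
      omega
    · intro j hj1 hj2
      rw [kinkWord_length] at hj2
      rw [List.getElem_take, List.getElem_drop]
      have hkg : (kinkWord _)[j] = (kinkWord ((b-i-1)/2)).getD j false := by
        rw [List.getD_eq_getElem _ _ (by rw [kinkWord_length]; omega)]
      rw [hkg, kinkWord_getD]
      have hwg : w[i + j]'(by simp [List.length_take, List.length_drop] at hj1; omega)
          = w.getD (i + j) false := by
        rw [List.getD_eq_getElem]
      rw [hwg]
      rcases Nat.eq_zero_or_pos j with rfl | hj0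
      · simpa using hi
      · by_cases hje : i + j = b
        · rw [hje, hb]; simp; omega
        · rw [hmid (i + j) (by omega) (by omega)]; simp; omega

lemma adjK_unique {x : ℤ → Bool} {i b b' : ℤ} (h : adjK x i b) (h' : adjK x i b') : b = b' := by
  rcases h with ⟨h1, _, _, h4, h5⟩
  rcases h' with ⟨h1', _, _, h4', h5'⟩
  rcases lt_trichotomy b b' with hlt | heq | hlt
  · have := h5' b h1 hlt; rw [h4] at this; exact absurd this (by simp)
  · exact heq
  · have := h5 b' h1' hlt; rw [h4'] at this; exact absurd this (by simp)

/-! ### window matching -/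

def Mw (x : ℤ → Bool) (w : List Bool) (p : ℤ) : Prop :=
  ∀ j : ℕ, j < w.length → x (p + j) = w.getD j false

lemma Mw_at {x : ℤ → Bool} {w : List Bool} {p : ℤ} (hM : Mw x w p) {t : ℤ}
    (h1 : p ≤ t) (h2 : t < p + w.length) : x t = w.getD (t - p).toNat false := by
  have h := hM (t - p).toNat (by omega)
  rwa [show p + ((t - p).toNat : ℤ) = t by omega] at h

lemma wAdj_to_adjK {x : ℤ → Bool} {w : List Bool} {p : ℤ} (hM : Mw x w p) {i b : ℕ}
    (h : wAdj w i b) : adjK x (p + i) (p + b) := by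
  obtain ⟨h1, h2, h3, h4, h5, h6⟩ := h
  refine ⟨by omega, by omega, ?_, ?_, ?_⟩
  · rw [hM i (by omega)]; exact h4
  · rw [hM b h2]; exact h5
  · intro t ht1 ht2
    rw [Mw_at hM (by omega) (by omega)]
    exact h6 (t - p).toNat (by omega) (by omega)

lemma adjK_to_wAdj {x : ℤ → Bool} {w : List Bool} {p : ℤ} (hM : Mw x w p) {a c : ℤ}
    (h : adjK x a c) (h1 : p ≤ a) (h2 : c < p + w.length) :
    wAdj w (a - p).toNat (c - p).toNat := by
  obtain ⟨k1, k2, k3, k4, k5⟩ := h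
  refine ⟨by omega, by omega, by omega, ?_, ?_, ?_⟩
  · rw [← Mw_at hM h1 (by omega)]; exact k3
  · rw [← Mw_at hM (by omega) h2]; exact k4
  · intro t ht1 ht2
    rw [← hM t (by omega)]
    exact k5 (p + (t : ℤ)) (by omega) (by omega)

/-! ### coherence -/

lemma coherence {x : ℤ → Bool} : ∀ d : ℕ, ∀ u v : ℤ, (v - u).toNat = d →
    x u = true → x v = true → u < v → (v - u) % 2 = 1 →
    ∃ a c, u ≤ a ∧ c ≤ v ∧ adjK x a c := by
  intro d
  induction d using Nat.strong_induction_on with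
  | _ d ih =>
    intro u v hd hu hv huv hpar
    by_cases hmid : ∃ t, u < t ∧ t < v ∧ x t = true
    · obtain ⟨t, ht1, ht2, ht3⟩ := hmid
      rcases Int.emod_two_eq_zero_or_one (t - u) with h | h
      · obtain ⟨a, c, hc1, hc2, hc3⟩ := ih (v - t).toNat (by omega) t v (by omega) ht3 hv
          (by omega) (by omega)
        exact ⟨a, c, by omega, hc2, hc3⟩
      · obtain ⟨a, c, hc1, hc2, hc3⟩ := ih (t - u).toNat (by omega) u t (by omega) hu ht3
          (by omega) h
        exact ⟨a, c, hc1, by omega, hc3⟩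
    · push_neg at hmid
      refine ⟨u, v, le_refl _, le_refl _, huv, hpar, hu, hv, ?_⟩
      intro t h1 h2
      by_contra hc
      exact absurd (hmid t h1 h2 (by simpa using hc)) (by simp)

lemma coherence' {x : ℤ → Bool} {u v : ℤ} (hu : x u = true) (hv : x v = true)
    (huv : u < v) (hpar : (v - u) % 2 = 1) : ∃ a c, u ≤ a ∧ c ≤ v ∧ adjK x a c :=
  coherence (v - u).toNat u v rfl hu hv huv hpar

/-! ### kink sets -/

lemma kinkAtW_lt {w : List Bool} {i : ℕ} (h : kinkAtW w i) : i < w.length := by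
  rw [kinkAtW_iff] at h
  obtain ⟨b, h1, h2, _⟩ := h
  omega

lemma KW_finite (w : List Bool) : {i : ℕ | kinkAtW w i}.Finite :=
  Set.Finite.subset (Set.finite_Icc 0 w.length) (fun i hi => by
    simp only [Set.mem_Icc]
    exact ⟨Nat.zero_le _, le_of_lt (kinkAtW_lt hi)⟩)

/-- For `x ∈ extC w p`, the kinks of `x` are exactly the lifted kinks of `w`. -/
lemma kinks_eq_lift {x : ℤ → Bool} {w : List Bool} {p : ℤ} (hM : Mw x w p)
    (hcfg : configKinks x (kinkCount w)) :
    {i : ℤ | kinkAtC x i} = (fun j : ℕ => p + (j : ℤ)) '' {i : ℕ | kinkAtW w i} := by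
  have hsub : (fun j : ℕ => p + (j : ℤ)) '' {i : ℕ | kinkAtW w i} ⊆ {i : ℤ | kinkAtC x i} := by
    rintro _ ⟨j, hj, rfl⟩
    simp only [Set.mem_setOf_eq, kinkAtW_iff] at hj
    obtain ⟨b, hb⟩ := hj
    simp only [Set.mem_setOf_eq, kinkAtC_iff]
    exact ⟨p + b, wAdj_to_adjK hM hb⟩
  have hinj : Function.Injective (fun j : ℕ => p + (j : ℤ)) := by
    intro a b h; simpa using h
  have hcard : ((fun j : ℕ => p + (j : ℤ)) '' {i : ℕ | kinkAtW w i}).ncard = kinkCount w := by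
    rw [Set.ncard_image_of_injective _ hinj]; rfl
  exact (Set.eq_of_subset_of_ncard_le hsub (by rw [hcard, hcfg.2]) hcfg.1).symm

/-- Bounds on kinks of `x ∈ extC w p`. -/
lemma kinks_bounds {x : ℤ → Bool} {w : List Bool} {p : ℤ} (hM : Mw x w p)
    (hcfg : configKinks x (kinkCount w)) {a c : ℤ} (h : adjK x a c) :
    p ≤ a ∧ c < p + w.length := by
  have ha : kinkAtC x a := by rw [kinkAtC_iff]; exact ⟨c, h⟩
  have := kinks_eq_lift hM hcfg
  have hmem : a ∈ (fun j : ℕ => p + (j : ℤ)) '' {i : ℕ | kinkAtW w i} := by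
    rw [← this]; exact ha
  obtain ⟨j, hj, rfl⟩ := hmem
  simp only [Set.mem_setOf_eq, kinkAtW_iff] at hj
  obtain ⟨b, hb⟩ := hj
  have h2 := wAdj_to_adjK hM hb
  have h3 := adjK_unique h h2
  have hblen := hb.2.1
  simp only at h3 ⊢
  omega

/-! ### f18W basic facts -/

lemma f18W_length (w : List Bool) : (f18W w).length = w.length - 2 := by
  simp [f18W, mapWord]

lemma f18W_getD {w : List Bool} {i : ℕ} (h : i < w.length - 2) :
    (f18W w).getD i false =
      rule18 (w.getD i false) (w.getD (i + 1) false) (w.getD (i + 2) false) := by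
  rw [List.getD_eq_getElem _ _ (by rw [f18W_length]; omega)]
  simp [f18W, mapWord]

lemma f18C_at (x : ℤ → Bool) (j : ℤ) :
    f18C x j = rule18 (x (j - 1)) (x j) (x (j + 1)) := rfl

/-- The image configuration matches the image word. -/
lemma Mw_image {x : ℤ → Bool} {w : List Bool} {p : ℤ} (hM : Mw x w p) :
    Mw (f18C x) (f18W w) (p + 1) := by
  intro j hj
  rw [f18W_length] at hj
  rw [f18C_at, f18W_getD hj]
  rw [show p + 1 + (j : ℤ) - 1 = p + (j : ℤ) by ring,
      show p + 1 + (j : ℤ) = p + ((j + 1 : ℕ) : ℤ) by push_cast; ring,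
      show p + ((j + 1 : ℕ) : ℤ) + 1 = p + ((j + 2 : ℕ) : ℤ) by push_cast; ring]
  rw [hM j (by omega), hM (j + 1) (by omega), hM (j + 2) (by omega)]

/-! ### alternating lists -/

def altL : ℕ → List Bool
  | 0 => []
  | 1 => [false]
  | (m+2) => false :: true :: altL m

def altT : ℕ → List Bool
  | 0 => []
  | 1 => [true]
  | (m+2) => true :: false :: altT m

lemma altL_length : ∀ m, (altL m).length = m := by
  intro m
  induction m using Nat.strong_induction_on with
  | _ m ih =>
    match m with
    | 0 => rfl
    | 1 => rfl
    | (m+2) => simp [altL, ih m (by omega)]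

lemma altT_length : ∀ m, (altT m).length = m := by
  intro m
  induction m using Nat.strong_induction_on with
  | _ m ih =>
    match m with
    | 0 => rfl
    | 1 => rfl
    | (m+2) => simp [altT, ih m (by omega)]

lemma altL_getD : ∀ m i, (altL m).getD i false = decide (i < m ∧ i % 2 = 1) := by
  intro m
  induction m using Nat.strong_induction_on with
  | _ m ih =>
    intro i
    match m with
    | 0 => simp [altL]
    | 1 =>
      match i with
      | 0 => simp [altL]
      | (i+1) => simp [altL] <;> omega
    | (m+2) =>
      match i with
      | 0 => simp [altL]
      | 1 => simp [altL]
      | (i+2) =>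
        show (altL m).getD i false = _
        rw [ih m (by omega) i]
        rw [decide_eq_decide]
        omega

lemma altT_getD : ∀ m i, (altT m).getD i false = decide (i < m ∧ i % 2 = 0) := by
  intro m
  induction m using Nat.strong_induction_on with
  | _ m ih =>
    intro i
    match m with
    | 0 => simp [altT]
    | 1 =>
      match i with
      | 0 => simp [altT]
      | (i+1) => simp [altT] <;> omega
    | (m+2) =>
      match i with
      | 0 => simp [altT]
      | 1 => simp [altT] <;> omega
      | (i+2) =>
        show (altT m).getD i false = _
        rw [ih m (by omega) i]
        rw [decide_eq_decide]
        omega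

lemma altL_eq : ∀ m, altL m =
    (List.replicate (m / 2) [false, true]).flatten ++ (if m % 2 = 1 then [false] else []) := by
  intro m
  induction m using Nat.strong_induction_on with
  | _ m ih =>
    match m with
    | 0 => rfl
    | 1 => rfl
    | (m+2) =>
      show false :: true :: altL m = _
      rw [ih m (by omega)]
      rw [show (m+2)/2 = m/2 + 1 by omega, show (m+2)%2 = m%2 by omega]
      simp [List.replicate_succ]

lemma altT_eq : ∀ m, altT m =
    (List.replicate (m / 2) [true, false]).flatten ++ (if m % 2 = 1 then [true] else []) := by
  intro m
  induction m using Nat.strong_induction_on with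
  | _ m ih =>
    match m with
    | 0 => rfl
    | 1 => rfl
    | (m+2) =>
      show true :: false :: altT m = _
      rw [ih m (by omega)]
      rw [show (m+2)/2 = m/2 + 1 by omega, show (m+2)%2 = m%2 by omega]
      simp [List.replicate_succ]

lemma bool_eq_decide {b : Bool} {P : Prop} [Decidable P] (h : b = true ↔ P) : b = decide P := by
  cases b with
  | true => exact (decide_eq_true (h.mp rfl)).symm
  | false =>
    have hp : ¬P := fun hp => by simpa using h.mpr hp
    exact (decide_eq_false hp).symm

/-- Constructor for `rightUnstable` from pointwise data. -/
lemma RU_of {w : List Bool} {j : ℕ} (hj2 : j + 2 ≤ w.length)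
    (h1 : w.getD j false = true) (h2 : w.getD (j+1) false = true)
    (h3 : ∀ s, j + 2 ≤ s → s < w.length → (w.getD s false = true ↔ (s - j) % 2 = 1)) :
    rightUnstable w := by
  set m := w.length - (j + 2) with hm
  have hdrop : w.drop j = true :: true :: altL m := by
    apply List.ext_getElem
    · simp [altL_length]; omega
    · intro i hi1 hi2
      rw [List.getElem_drop]
      have hgd : w[j + i]'(by simp at hi1; omega) = w.getD (j + i) false := by
        rw [List.getD_eq_getElem]
      rw [hgd]
      match i, hi1, hi2 with
      | 0, hi1, hi2 => simpa using h1
      | 1, hi1, hi2 => simpa using h2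
      | (i+2), hi1, hi2 =>
        rw [List.getElem_cons_succ, List.getElem_cons_succ, ← List.getD_eq_getElem _ _]
        rw [altL_getD]
        apply bool_eq_decide
        rw [h3 (j + (i + 2)) (by omega) (by simp at hi1; omega)]
        simp at hi1
        omega
  refine ⟨if m % 2 = 1 then [false] else [], w.take j, m / 2, by split <;> simp, ?_⟩
  conv_lhs => rw [← List.take_append_drop j w, hdrop]
  rw [show (true : Bool) :: true :: altL m = [true, true] ++ altL m by rfl, altL_eq m]
  simp [List.append_assoc]

/-- Constructor for `specialForm` from pointwise data. -/
lemma specialForm_of_alt {w : List Bool} {c : ℕ} (hc : c ≤ 1)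
    (h : ∀ s, s < w.length → (w.getD s false = true ↔ s % 2 = c)) : specialForm w := by
  rcases Nat.eq_zero_or_pos w.length with h0 | hpos
  · rw [List.length_eq_zero_iff] at h0
    exact ⟨[], [], 0, Or.inl rfl, Or.inl rfl, by simp [h0]⟩
  set m := w.length - c with hm
  by_cases hc1 : c = 1
  · subst hc1
    have heq : w = false :: altT m := by
      apply List.ext_getElem
      · simp [altT_length]
        omega
      · intro i hi1 hi2
        have hgd : w[i] = w.getD i false := by rw [List.getD_eq_getElem]
        rw [hgd]
        match i, hi1, hi2 with
        | 0, hi1, hi2 =>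
          rw [List.getElem_cons_zero]
          cases hb : w.getD 0 false with
          | false => rfl
          | true => have := (h 0 (by omega)).mp hb; omega
        | (i+1), hi1, hi2 =>
          rw [List.getElem_cons_succ, ← List.getD_eq_getElem _ _, altT_getD]
          apply bool_eq_decide
          rw [h (i+1) hi1]
          omega
    refine ⟨[false], if m % 2 = 1 then [true] else [], m / 2,
      Or.inr rfl, by split <;> simp, ?_⟩
    rw [heq, altT_eq m]
    simp [List.append_assoc]
  · have hc0 : c = 0 := by omega
    subst hc0
    have heq : w = altT m := by
      apply List.ext_getElem
      · simp [altT_length]; omega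
      · intro i hi1 hi2
        have hgd : w[i] = w.getD i false := by rw [List.getD_eq_getElem]
        rw [hgd, ← List.getD_eq_getElem _ _, altT_getD]
        apply bool_eq_decide
        rw [h i hi1]
        omega
    refine ⟨[], if m % 2 = 1 then [true] else [], m / 2,
      Or.inl rfl, by split <;> simp, ?_⟩
    rw [heq, altT_eq m]
    simp [List.append_assoc]

/-! ### reversal -/

lemma revflatFT (n : ℕ) : ((List.replicate n [false, true]).flatten).reverse
    = (List.replicate n [true, false]).flatten := by
  induction n with
  | zero => simp
  | succ n ih =>
    conv_lhs => rw [List.replicate_succ', List.flatten_append]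
    rw [List.reverse_append, ih, List.replicate_succ]
    simp

lemma revflatTF (n : ℕ) : ((List.replicate n [true, false]).flatten).reverse
    = (List.replicate n [false, true]).flatten := by
  rw [← revflatFT n, List.reverse_reverse]

lemma LU_of_RU_reverse {w : List Bool} (h : rightUnstable w.reverse) : leftUnstable w := by
  obtain ⟨z, s, n, hz, heq⟩ := h
  have : w = z.reverse ++ (List.replicate n [true, false]).flatten ++ [true, true] ++ s.reverse := by
    have := congrArg List.reverse heq
    rw [List.reverse_reverse] at this
    rw [this]
    simp [List.reverse_append, revflatFT, List.append_assoc]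
  refine ⟨z.reverse, s.reverse, n, ?_, this⟩
  rcases hz with rfl | rfl
  · exact Or.inl rfl
  · exact Or.inr rfl

lemma getD_reverse {w : List Bool} {j : ℕ} (h : j < w.length) :
    w.reverse.getD j false = w.getD (w.length - 1 - j) false := by
  rw [List.getD_eq_getElem _ _ (by simpa using h), List.getD_eq_getElem _ _ (by omega)]
  rw [List.getElem_reverse]

lemma flatTF_eq_altT (n : ℕ) : (List.replicate n [true, false]).flatten = altT (2 * n) := by
  rw [altT_eq]
  rw [show 2 * n / 2 = n by omega, if_neg (by omega)]
  simp

lemma specialForm_alt_elim {w : List Bool} (h : specialForm w) :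
    ∃ c ≤ 1, ∀ s, s < w.length → (w.getD s false = true ↔ s % 2 = c) := by
  obtain ⟨z₁, z₂, n, hz₁, hz₂, heq⟩ := h
  have hflat : (List.replicate n [true, false]).flatten ++ z₂
      = altT (2 * n + z₂.length) := by
    rcases hz₂ with rfl | rfl
    · rw [List.append_nil, List.length_nil, Nat.add_zero, flatTF_eq_altT]
    · rw [List.length_singleton, altT_eq]
      rw [show (2 * n + 1) / 2 = n by omega, if_pos (by omega)]
  rcases hz₁ with rfl | rfl
  · simp only [List.nil_append] at heq
    rw [hflat] at heq
    refine ⟨0, by omega, ?_⟩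
    intro s hs
    rw [heq] at hs ⊢
    rw [altT_length] at hs
    rw [altT_getD]
    simp only [decide_eq_true_eq]
    omega
  · rw [List.append_assoc, hflat] at heq
    rw [show ([false] ++ altT (2 * n + z₂.length)) = false :: altT (2 * n + z₂.length) by rfl]
      at heq
    refine ⟨1, le_refl _, ?_⟩
    intro s hs
    rw [heq] at hs ⊢
    rw [List.length_cons, altT_length] at hs
    match s with
    | 0 => simp
    | (s+1) =>
      rw [List.getD_cons_succ, altT_getD]
      simp only [decide_eq_true_eq]
      omega

lemma specialForm_of_reverse {w : List Bool} (h : specialForm w.reverse) : specialForm w := by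
  obtain ⟨c, hc, hp⟩ := specialForm_alt_elim h
  apply specialForm_of_alt (c := (w.length + 1 + c) % 2) (by omega)
  intro s hs
  have := hp (w.length - 1 - s) (by simp; omega)
  rw [getD_reverse (by omega)] at this
  rw [show w.length - 1 - (w.length - 1 - s) = s by omega] at this
  rw [this]
  omega

lemma getD_reverse' {w : List Bool} {j : ℕ} (h : j < w.length) :
    w.getD j false = w.reverse.getD (w.length - 1 - j) false := by
  rw [getD_reverse (by omega), show w.length - 1 - (w.length - 1 - j) = j by omega]

lemma f18W_reverse (w : List Bool) : f18W w.reverse = (f18W w).reverse := by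
  apply List.ext_getElem
  · simp [f18W_length]
  · intro i hi1 hi2
    rw [f18W_length, List.length_reverse] at hi1
    rw [← List.getD_eq_getElem (f18W w.reverse) false,
      ← List.getD_eq_getElem ((f18W w).reverse) false]
    rw [getD_reverse (by rw [f18W_length]; omega)]
    rw [f18W_length]
    rw [f18W_getD (by simpa using hi1), f18W_getD (by omega)]
    rw [getD_reverse (by omega), getD_reverse (by omega), getD_reverse (by omega)]
    rw [r18_symm]
    congr 2 <;> omega

def revC (x : ℤ → Bool) : ℤ → Bool := fun i => x (-i)

lemma f18C_revC (x : ℤ → Bool) : f18C (revC x) = revC (f18C x) := by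
  funext i
  show rule18 (x (-(i-1))) (x (-i)) (x (-(i+1))) = rule18 (x (-i-1)) (x (-i)) (x (-i+1))
  rw [r18_symm]
  congr 2 <;> ring_nf

lemma adjK_revC {x : ℤ → Bool} {a c : ℤ} : adjK (revC x) a c ↔ adjK x (-c) (-a) := by
  constructor
  · rintro ⟨h1, h2, h3, h4, h5⟩
    refine ⟨by omega, by omega, h4, h3, fun t ht1 ht2 => ?_⟩
    have := h5 (-t) (by omega) (by omega)
    simpa [revC] using this
  · rintro ⟨h1, h2, h3, h4, h5⟩
    exact ⟨by omega, by omega, h4, h3, fun t ht1 ht2 => h5 (-t) (by omega) (by omega)⟩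

lemma Mw_revC {x : ℤ → Bool} {w : List Bool} {p : ℤ} (hM : Mw x w p) :
    Mw (revC x) w.reverse (-(p + w.length - 1)) := by
  intro j hj
  rw [List.length_reverse] at hj
  show x (-(-(p + w.length - 1) + j)) = _
  rw [show (-(-(p + (w.length:ℤ) - 1) + j)) = p + ((w.length - 1 - j : ℕ) : ℤ) by push_cast; omega]
  rw [hM _ (by omega), getD_reverse hj]

/-! ### no image kink crosses the right boundary of a non-right-unstable word -/

lemma no_right_cross {w : List Bool} {p : ℤ} {x : ℤ → Bool} (hlen : 3 ≤ w.length)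
    (hM : Mw x w p)
    (hB : ∀ a c, adjK x a c → p ≤ a ∧ c < p + w.length)
    (hS : ¬ rightUnstable w)
    {a b : ℤ} (hk : adjK (f18C x) a b) (hbe : p + w.length - 1 ≤ b) : False := by
  obtain ⟨hab, hpar, hya, hyb, hmid⟩ := hk
  rw [f18C_at, r18_true_iff] at hya hyb
  obtain ⟨hxa, hne_a⟩ := hya
  obtain ⟨hxb, hne_b⟩ := hyb
  have claimA : ∀ d : ℕ, ∀ t, (b - t).toNat = d → a < t → t < b → x t = true →
      x (b - 1) = true := by
    intro d
    induction d using Nat.strong_induction_on with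
    | _ d ih =>
      intro t hd h1 h2 hx
      by_cases hbt : t = b - 1
      · rwa [hbt] at hx
      · have h2' : t + 1 < b := by omega
        have hy := hmid (t + 1) (by omega) h2'
        rw [f18C_at, show t + 1 - 1 = t by ring, hx] at hy
        cases hb1 : x (t + 1) with
        | true => exact ih (b - (t+1)).toNat (by omega) (t+1) (by omega) (by omega) h2' hb1
        | false =>
          cases hb2 : x (t + 1 + 1) with
          | true =>
            have hne : t + 1 + 1 ≠ b := by
              intro hc; rw [hc, hxb] at hb2; exact absurd hb2 (by simp)
            exact ih (b - (t+1+1)).toNat (by omega) (t+1+1) (by omega) (by omega)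
              (by omega) hb2
          | false => rw [hb1, hb2] at hy; simp [rule18] at hy
  cases hxb1 : x (b + 1) with
  | true =>
    have hxbm : x (b - 1) = false := by
      cases hbm : x (b - 1) with
      | false => rfl
      | true => exact absurd (hbm.trans hxb1.symm) hne_b
    have hint : ∀ t, a < t → t < b → x t = false := by
      intro t h1 h2
      cases hxt : x t with
      | false => rfl
      | true => exact absurd (claimA (b - t).toNat t rfl h1 h2 hxt) (by simp [hxbm])
    have hxa1 : x (a + 1) = false := by
      by_cases h : a + 1 = b
      · rw [h]; exact hxb
      · exact hint (a+1) (by omega) (by omega)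
    have hxam : x (a - 1) = true := by
      cases ham : x (a - 1) with
      | true => rfl
      | false => exact absurd (ham.trans hxa1.symm) hne_a
    have hadj : adjK x (a - 1) (b + 1) := by
      refine ⟨by omega, by omega, hxam, hxb1, ?_⟩
      intro t h1 h2
      by_cases hta : t = a
      · rw [hta]; exact hxa
      by_cases htb : t = b
      · rw [htb]; exact hxb
      · exact hint t (by omega) (by omega)
    have := (hB _ _ hadj).2
    omega
  | false =>
    have hxbm : x (b - 1) = true := by
      cases hbm : x (b - 1) with
      | true => rfl
      | false => exact absurd (hbm.trans hxb1.symm) hne_b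
    have hb3 : a + 3 ≤ b := by
      by_contra hc
      have : b = a + 1 ∨ b = a + 2 := by omega
      rcases this with h | h
      · rw [show b - 1 = a by omega, hxa] at hxbm; exact absurd hxbm (by simp)
      · omega
    have descent : ∀ d : ℕ, ∀ t, (t - a).toNat = d → a < t → t < b → (b - t) % 2 = 1 →
        x t = true → (∀ s, t < s → s ≤ b → (x s = true ↔ (b - s) % 2 = 1)) → False := by
      intro d
      induction d using Nat.strong_induction_on with
      | _ d ih =>
        intro t hd h1 h2 hpt hxt hinv
        have h1' : a < t - 1 := by
          by_contra hc
          have : t = a + 1 := by omega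
          omega
        have hyt := hmid (t - 1) (by omega) (by omega)
        rw [f18C_at, show t - 1 - 1 = t - 2 by ring, show t - 1 + 1 = t by ring, hxt] at hyt
        cases htm : x (t - 1) with
        | true =>
          have hadj : adjK x (t - 1) t :=
            ⟨by omega, by omega, htm, hxt, fun s hs1 hs2 => absurd hs1 (by omega)⟩
          obtain ⟨hp1, hp2⟩ := hB _ _ hadj
          apply hS
          apply RU_of (w := w) (j := (t - 1 - p).toNat) (by omega)
          · rw [← Mw_at hM (by omega) (by omega)]; exact htm
          · rw [show (t - 1 - p).toNat + 1 = (t - p).toNat by omega]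
            rw [← Mw_at hM (by omega) (by omega)]; exact hxt
          · intro s hs1 hs2
            rw [← hM s hs2]
            rw [hinv (p + s) (by omega) (by omega)]
            omega
        | false =>
          have hxt2 : x (t - 2) = true := by
            cases ht2 : x (t - 2) with
            | true => rfl
            | false => rw [htm, ht2] at hyt; simp [rule18] at hyt
          have h1'' : a < t - 2 := by
            by_contra hc
            have hta : t - 2 = a := by omega
            rw [hta, hxa] at hxt2
            exact absurd hxt2 (by simp)
          refine ih (t - 2 - a).toNat (by omega) (t - 2) (by omega) (by omega) (by omega)
            (by omega) hxt2 ?_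
          intro s hs1 hs2
          by_cases hst : s = t - 1
          · rw [hst, htm]
            constructor
            · intro hh; exact absurd hh (by simp)
            · intro hh; exfalso; omega
          by_cases hst2 : s = t
          · rw [hst2, hxt]
            constructor
            · intro _; omega
            · intro _; rfl
          · exact hinv s (by omega) hs2
    apply descent (b - 1 - a).toNat (b - 1) rfl (by omega) (by omega) (by omega) hxbm
    intro s hs1 hs2
    have hsb : s = b := by omega
    rw [hsb, hxb]
    constructor
    · intro hh; exact absurd hh (by simp)
    · intro hh; exfalso; omega

/-! ### Part 1 -/

lemma no_left_cross {w : List Bool} {p : ℤ} {x : ℤ → Bool} (hlen : 3 ≤ w.length)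
    (hM : Mw x w p)
    (hB : ∀ a c, adjK x a c → p ≤ a ∧ c < p + w.length)
    (hS : ¬ leftUnstable w)
    {a b : ℤ} (hk : adjK (f18C x) a b) (hae : a ≤ p) : False := by
  have hM' := Mw_revC hM
  have hB' : ∀ a' c', adjK (revC x) a' c' →
      -(p + w.length - 1) ≤ a' ∧ c' < -(p + w.length - 1) + w.reverse.length := by
    intro a' c' h
    have := hB _ _ (adjK_revC.mp h)
    simp only [List.length_reverse]
    omega
  have hS' : ¬ rightUnstable w.reverse := fun h => hS (LU_of_RU_reverse h)
  have hk' : adjK (f18C (revC x)) (-b) (-a) := by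
    rw [f18C_revC]
    rw [adjK_revC]
    simpa using hk
  exact no_right_cross (by simpa using hlen) hM' hB' hS' hk'
    (by simp only [List.length_reverse]; omega)

lemma part1 {w : List Bool} (hlen : 3 ≤ w.length) (hw : stable w) (p : ℤ) :
    f18C '' extC w p ⊆ extC (f18W w) (p + 1) := by
  rintro _ ⟨x, ⟨hM, hcfg⟩, rfl⟩
  have hSL : ¬ leftUnstable w := fun h => hw (Or.inl h)
  have hSR : ¬ rightUnstable w := fun h => hw (Or.inr h)
  have hB : ∀ a c, adjK x a c → p ≤ a ∧ c < p + w.length :=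
    fun a c h => kinks_bounds hM hcfg h
  have hMy : Mw (f18C x) (f18W w) (p + 1) := Mw_image hM
  have hset : {i : ℤ | kinkAtC (f18C x) i}
      = (fun j : ℕ => (p + 1) + (j : ℤ)) '' {i : ℕ | kinkAtW (f18W w) i} := by
    ext q
    simp only [Set.mem_setOf_eq, Set.mem_image]
    constructor
    · intro hq
      rw [kinkAtC_iff] at hq
      obtain ⟨c, hc⟩ := hq
      have hcb : ¬ (p + w.length - 1 ≤ c) := fun h => no_right_cross hlen hM hB hSR hc h
      have hqa : ¬ (q ≤ p) := fun h => no_left_cross hlen hM hB hSL hc h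
      push_neg at hcb hqa
      have hwadj := adjK_to_wAdj hMy hc (by omega)
        (by rw [f18W_length]; push_cast; omega)
      refine ⟨(q - (p + 1)).toNat, ?_, by omega⟩
      rw [kinkAtW_iff]
      exact ⟨_, hwadj⟩
    · rintro ⟨j, hj, rfl⟩
      rw [kinkAtW_iff] at hj
      obtain ⟨c, hc⟩ := hj
      rw [kinkAtC_iff]
      exact ⟨_, wAdj_to_adjK hMy hc⟩
  have hinj : Function.Injective (fun j : ℕ => (p + 1) + (j : ℤ)) := by
    intro u v h; simpa using h
  refine ⟨hMy, ?_, ?_⟩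
  · rw [hset]; exact (KW_finite _).image _
  · rw [hset, Set.ncard_image_of_injective _ hinj]; rfl

/-! ### anchors -/

lemma anchor_right {w : List Bool} (hlen : 3 ≤ w.length) (hS : ¬ rightUnstable w)
    (hsp : ¬ specialForm w) {lam : ℕ} (hlaml : lam < w.length)
    (hlam : w.getD lam false = true)
    (hlast : ∀ s, lam < s → s < w.length → w.getD s false = false) :
    ∃ q : ℕ, q + 3 ≤ w.length ∧ (f18W w).getD q false = true ∧ q % 2 = lam % 2 ∧
      ∀ s : ℕ, q ≤ s → (f18W w).getD s false = true → s % 2 = lam % 2 := by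
  by_cases hz : lam + 3 ≤ w.length
  · -- at least two trailing zeros
    refine ⟨lam, hz, ?_, rfl, ?_⟩
    · rw [f18W_getD (by omega), hlam, hlast _ (by omega) (by omega),
        hlast _ (by omega) (by omega)]
      rfl
    · intro s hs hv
      by_cases hsl : s < w.length - 2
      · rw [f18W_getD hsl, r18_true_iff] at hv
        obtain ⟨h1, h2⟩ := hv
        have h22 : w.getD (s + 2) false = false := hlast _ (by omega) (by omega)
        rw [h22] at h2
        have hws : w.getD s false = true := by
          cases hws : w.getD s false with
          | true => rfl
          | false => rw [hws] at h2; exact absurd rfl h2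
        have : ¬ (lam < s) := fun hl => by
          rw [hlast s hl (by omega)] at hws; exact absurd hws (by simp)
        have : s = lam := by omega
        omega
      · rw [List.getD_eq_default _ _ (by rw [f18W_length]; omega)] at hv
        exact absurd hv (by simp)
  · -- at most one trailing zero: descend the alternating run
    have hzz : w.length ≤ lam + 2 := by omega
    have descent : ∀ mu : ℕ, mu % 2 = lam % 2 → mu ≤ lam → w.getD mu false = true →
        (∀ s, mu ≤ s → s < w.length → (w.getD s false = true ↔ (s % 2 = lam % 2 ∧ s ≤ lam))) →
        ∃ q : ℕ, q + 3 ≤ w.length ∧ (f18W w).getD q false = true ∧ q % 2 = lam % 2 ∧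
          ∀ s : ℕ, q ≤ s → (f18W w).getD s false = true → s % 2 = lam % 2 := by
      intro mu
      induction mu using Nat.strong_induction_on with
      | _ mu ih =>
        intro hpar hml hwmu hinv
        match mu, hpar, hml, hwmu with
        | 0, hpar, hml, hwmu =>
          exfalso
          apply hsp
          apply specialForm_of_alt (c := lam % 2) (by omega)
          intro s hs
          rw [hinv s (by omega) hs]
          omega
        | 1, hpar, hml, hwmu =>
          exfalso
          cases hw0 : w.getD 0 false with
          | true =>
            apply hS
            apply RU_of (j := 0) (by omega) hw0 hwmu
            intro s hs1 hs2
            rw [hinv s (by omega) hs2]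
            omega
          | false =>
            apply hsp
            apply specialForm_of_alt (c := lam % 2) (by omega)
            intro s hs
            match s with
            | 0 =>
              rw [hw0]
              constructor
              · intro h; exact absurd h (by simp)
              · intro h; exfalso; omega
            | (s+1) =>
              rw [hinv (s+1) (by omega) hs]
              omega
        | (m+2), hpar, hml, hwmu =>
          cases hwm1 : w.getD (m+1) false with
          | true =>
            exfalso
            apply hS
            apply RU_of (j := m+1) (by omega) hwm1 (by simpa using hwmu)
            intro s hs1 hs2
            rw [hinv s (by omega) hs2]
            omega
          | false =>
            cases hwm2 : w.getD m false with
            | true =>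
              apply ih m (by omega) (by omega) (by omega) hwm2
              intro s hs1 hs2
              by_cases hsm : s = m
              · rw [hsm, hwm2]
                constructor
                · intro _; constructor; omega; omega
                · intro _; rfl
              by_cases hsm1 : s = m + 1
              · rw [hsm1, hwm1]
                constructor
                · intro h; exact absurd h (by simp)
                · intro h; exfalso; omega
              · exact hinv s (by omega) hs2
            | false =>
              refine ⟨m, by omega, ?_, by omega, ?_⟩
              · rw [f18W_getD (by omega), hwm2, hwm1, hwmu]
                rfl
              · intro s hs hv
                by_cases hsl : s < w.length - 2
                · rw [f18W_getD hsl, r18_true_iff] at hv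
                  obtain ⟨h1, h2⟩ := hv
                  cases hws : w.getD s false with
                  | true =>
                    have hsm : ¬ (s = m) := fun hc => by
                      rw [hc, hwm2] at hws; exact absurd hws (by simp)
                    have hsm1 : ¬ (s = m + 1) := fun hc => by
                      rw [hc, hwm1] at hws; exact absurd hws (by simp)
                    have := (hinv s (by omega) (by omega)).mp hws
                    omega
                  | false =>
                    rw [hws] at h2
                    have hws2 : w.getD (s + 2) false = true := by
                      cases hws2 : w.getD (s + 2) false with
                      | true => rfl
                      | false => rw [hws2] at h2; exact absurd rfl h2
                    have := (hinv (s + 2) (by omega) (by omega)).mp hws2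
                    omega
                · rw [List.getD_eq_default _ _ (by rw [f18W_length]; omega)] at hv
                  exact absurd hv (by simp)
    apply descent lam rfl (le_refl _) hlam
    intro s hs1 hs2
    by_cases hsl : s = lam
    · rw [hsl, hlam]
      constructor
      · intro _; exact ⟨rfl, le_refl _⟩
      · intro _; rfl
    · rw [hlast s (by omega) hs2]
      constructor
      · intro h; exact absurd h (by simp)
      · intro h; exfalso; omega

/-! ### right tail construction -/

def seqR (u v : Bool) (g : ℕ → Bool) : ℕ → Bool
  | 0 => u
  | 1 => v
  | (k+2) => xor (seqR u v g k) (g (k+1))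

lemma exists_last_one {w : List Bool} (h : ∃ j, j < w.length ∧ w.getD j false = true) :
    ∃ lam, lam < w.length ∧ w.getD lam false = true ∧
      ∀ s, lam < s → s < w.length → w.getD s false = false := by
  classical
  obtain ⟨j0, hj0, hj0t⟩ := h
  have h1 : w.getD (Nat.findGreatest (fun j => w.getD j false = true) (w.length - 1)) false
      = true := Nat.findGreatest_spec (P := fun j => w.getD j false = true)
        (n := w.length - 1) (m := j0) (by omega) hj0t
  refine ⟨Nat.findGreatest (fun j => w.getD j false = true) (w.length - 1), ?_, h1, ?_⟩
  · have := Nat.findGreatest_le (P := fun j => w.getD j false = true) (w.length - 1)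
    omega
  · intro s hs1 hs2
    have := Nat.findGreatest_is_greatest (P := fun j => w.getD j false = true)
      (k := s) hs1 (by omega)
    simpa using this

lemma right_construct {w : List Bool} {p : ℤ} {y : ℤ → Bool} (hlen : 3 ≤ w.length)
    (hSR : ¬ rightUnstable w) (hsp : ¬ specialForm w)
    {lam : ℕ} (hlaml : lam < w.length) (hlam : w.getD lam false = true)
    (hlast : ∀ s, lam < s → s < w.length → w.getD s false = false)
    (hMy : Mw y (f18W w) (p + 1))
    (hBy : ∀ a c, adjK y a c → p + 1 ≤ a ∧ c < p + 1 + (f18W w).length) :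
    ∃ g : ℤ → Bool,
      Mw g w p ∧
      (∀ j, p + w.length - 1 ≤ j → f18C g j = y j) ∧
      (∀ t, p + w.length - 2 ≤ t → (t - (p + lam)) % 2 = 1 → g t = false) := by
  obtain ⟨q, hq3, hqv, hqpar, hqall⟩ := anchor_right hlen hSR hsp hlaml hlam hlast
  set L : ℤ := (w.length : ℤ) with hL
  have hvlen : ((f18W w).length : ℤ) = L - 2 := by rw [f18W_length]; push_cast; omega
  have Y1 : ∀ j : ℤ, p + 1 + q ≤ j → y j = true → (j - (p + lam)) % 2 = 1 := by
    intro j hj hyj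
    by_cases hjw : j < p + 1 + ((f18W w).length : ℤ)
    · rw [Mw_at hMy (by omega) hjw] at hyj
      have := hqall (j - (p + 1)).toNat (by omega) hyj
      omega
    · by_contra hpar2
      have hyq : y (p + 1 + q) = true := by
        rw [Mw_at hMy (by omega) (by omega)]
        rw [show (p + 1 + (q:ℤ) - (p + 1)).toNat = q by omega]
        exact hqv
      obtain ⟨al, ga, h1, h2, hadj⟩ := coherence' hyq hyj (by omega) (by omega)
      obtain ⟨hb1, hb2⟩ := hBy _ _ hadj
      obtain ⟨k1, k2, k3, k4, _⟩ := hadj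
      rw [Mw_at hMy (by omega) (by omega)] at k3
      rw [Mw_at hMy (by omega) (by omega)] at k4
      have e1 := hqall (al - (p + 1)).toNat (by omega) k3
      have e2 := hqall (ga - (p + 1)).toNat (by omega) k4
      omega
  set u := w.getD (w.length - 2) false with hu
  set v := w.getD (w.length - 1) false with hv
  set G : ℕ → Bool := fun k => y (p + L - 2 + k) with hG
  set g : ℤ → Bool := fun t =>
    if t < p + L - 2 then (if p ≤ t then w.getD (t - p).toNat false else false)
    else seqR u v G (t - (p + L - 2)).toNat with hg
  have hMg : Mw g w p := by
    intro j hj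
    show (if (p + (j:ℤ)) < p + L - 2 then _ else _) = _
    by_cases hjc : (j:ℤ) < L - 2
    · rw [if_pos (by omega), if_pos (by omega)]
      congr 1
      omega
    · rw [if_neg (by omega)]
      by_cases hj2 : j = w.length - 2
      · rw [show (p + (j:ℤ) - (p + L - 2)).toNat = 0 by omega]
        show u = _
        rw [hu, hj2]
      · have hj1 : j = w.length - 1 := by omega
        rw [show (p + (j:ℤ) - (p + L - 2)).toNat = 1 by omega]
        show v = _
        rw [hv, hj1]
  have hgwin : ∀ t, p ≤ t → t < p + L → g t = w.getD (t - p).toNat false := fun t h1 h2 =>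
    Mw_at hMg h1 (by omega)
  have grec : ∀ t, p + L ≤ t → g t = xor (g (t - 2)) (y (t - 1)) := by
    intro t ht
    show (if t < p + L - 2 then _ else _) = _
    rw [if_neg (by omega)]
    rw [show (t - (p + L - 2)).toNat = ((t - 2 - (p + L - 2)).toNat) + 2 by omega]
    show xor (seqR u v G (t - 2 - (p + L - 2)).toNat) (G ((t - 2 - (p + L - 2)).toNat + 1)) = _
    congr 1
    · show _ = (if t - 2 < p + L - 2 then _ else _)
      rw [if_neg (by omega)]
    · show y _ = y _
      congr 1
      push_cast
      omega
  have BR : ∀ d : ℕ, ∀ t, (t - (p + L - 2)).toNat = d → p + L - 2 ≤ t →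
      (t - (p + lam)) % 2 = 1 → g t = false := by
    intro d
    induction d using Nat.strong_induction_on with
    | _ d ih =>
      intro t hd ht hpar
      by_cases htw : t < p + L
      · rw [hgwin t (by omega) htw]
        set s := (t - p).toNat with hs
        have hsl : s = w.length - 2 ∨ s = w.length - 1 := by omega
        by_cases hgt : lam < s
        · exact hlast s hgt (by omega)
        · -- s = len - 2, lam = len - 1
          have hs2 : s = w.length - 2 ∧ lam = w.length - 1 := by omega
          rw [hs2.1]
          cases hw2 : w.getD (w.length - 2) false with
          | false => rfl
          | true =>
            exfalso
            apply hSR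
            apply RU_of (j := w.length - 2) (by omega) hw2
              (by rw [show w.length - 2 + 1 = w.length - 1 by omega, ← hs2.2]; exact hlam)
            intro s' hs1' hs2'
            omega
      · rw [grec t (by omega)]
        rw [ih (t - 2 - (p + L - 2)).toNat (by omega) (t - 2) rfl (by omega) (by omega)]
        cases hyt : y (t - 1) with
        | false => rfl
        | true =>
          have := Y1 (t - 1) (by omega) hyt
          omega
  refine ⟨g, hMg, ?_, fun t h1 h2 => BR (t - (p + L - 2)).toNat t rfl h1 h2⟩
  intro j hj
  rw [f18C_at]
  rcases Int.emod_two_eq_zero_or_one (j - (p + lam)) with hpar | hpar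
  · have hgm : g (j - 1) = false := BR _ _ rfl (by omega) (by omega)
    have hgp : g (j + 1) = false := BR _ _ rfl (by omega) (by omega)
    rw [hgm, hgp]
    have hyj : y j = false := by
      cases hyj : y j with
      | false => rfl
      | true => have := Y1 j (by omega) hyj; omega
    rw [hyj]
    cases g j <;> rfl
  · have hgj : g j = false := BR _ _ rfl (by omega) hpar
    rw [hgj, r18_mid_false]
    have := grec (j + 1) (by omega)
    rw [show j + 1 - 2 = j - 1 by ring, show j + 1 - 1 = j by ring] at this
    rw [this]
    cases g (j - 1) <;> cases y j <;> rfl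

/-! ### all-zero words -/

def seq1 (g : ℕ → Bool) : ℕ → Bool
  | 0 => false
  | (k+1) => xor (seq1 g k) (g k)

lemma kinkCount_zero {w : List Bool} (hall : ∀ j, j < w.length → w.getD j false = false) :
    kinkCount w = 0 := by
  have hempty : {i : ℕ | kinkAtW w i} = ∅ := by
    ext i
    simp only [Set.mem_setOf_eq, Set.mem_empty_iff_false, iff_false]
    intro hi
    rw [kinkAtW_iff] at hi
    obtain ⟨b, h1, h2, h3, h4, h5, _⟩ := hi
    rw [hall b h2] at h5
    exact absurd h5 (by simp)
  rw [kinkCount, hempty, Set.ncard_empty]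

lemma locality {x1 x2 : ℤ → Bool} {j : ℤ} (h1 : x1 (j-1) = x2 (j-1)) (h2 : x1 j = x2 j)
    (h3 : x1 (j+1) = x2 (j+1)) : f18C x1 j = f18C x2 j := by
  rw [f18C_at, f18C_at, h1, h2, h3]

lemma zero_construct {w : List Bool} {p : ℤ} {y : ℤ → Bool} (hlen : 3 ≤ w.length)
    (hall : ∀ j, j < w.length → w.getD j false = false)
    (hMy : Mw y (f18W w) (p + 1)) (hcfgy : configKinks y (kinkCount (f18W w))) :
    ∃ x ∈ extC w p, f18C x = y := by
  set L : ℤ := (w.length : ℤ) with hL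
  have hv0 : ∀ s, (f18W w).getD s false = false := by
    intro s
    by_cases hs : s < w.length - 2
    · rw [f18W_getD hs, hall s (by omega), hall (s+1) (by omega), hall (s+2) (by omega)]
      rfl
    · exact List.getD_eq_default _ _ (by rw [f18W_length]; omega)
  have hkv : kinkCount (f18W w) = 0 := kinkCount_zero (fun j _ => hv0 j)
  have hynok : ∀ i, ¬ kinkAtC y i := by
    intro i hi
    have hempty : {i : ℤ | kinkAtC y i} = ∅ :=
      (Set.ncard_eq_zero hcfgy.1).mp (by rw [hcfgy.2, hkv])
    have : i ∈ {i : ℤ | kinkAtC y i} := hi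
    rw [hempty] at this
    exact this
  have hco : ∀ j j' : ℤ, y j = true → y j' = true → (j' - j) % 2 = 0 := by
    have key : ∀ j j' : ℤ, j < j' → y j = true → y j' = true → (j' - j) % 2 = 0 := by
      intro j j' hlt h h'
      by_contra hodd
      obtain ⟨a, c, _, _, hadj⟩ := coherence' h h' hlt (by omega)
      exact hynok a ((kinkAtC_iff y a).mpr ⟨c, hadj⟩)
    intro j j' h h'
    rcases lt_trichotomy j j' with hlt | rfl | hlt
    · exact key j j' hlt h h'
    · omega
    · have := key j' j hlt h' h; omega
  have hMyat : ∀ jj : ℤ, p + 1 ≤ jj → jj ≤ p + L - 2 → y jj = false := by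
    intro jj h1 h2
    rw [Mw_at hMy h1 (by rw [f18W_length]; push_cast; omega)]
    exact hv0 _
  by_cases hy1 : ∃ j : ℤ, y j = true
  · obtain ⟨j0, hj0⟩ := hy1
    have hyz : ∀ jj : ℤ, (jj - j0) % 2 = 1 → y jj = false := by
      intro jj hjj
      cases hyj : y jj with
      | false => rfl
      | true => have := hco j0 jj hj0 hyj; omega
    set s : ℤ := if (p - j0) % 2 = 0 then p + 1 else p with hs
    have hspar : (s - j0) % 2 = 1 := by
      rw [hs]; split <;> omega
    have hsp2 : p ≤ s ∧ s ≤ p + 1 := by rw [hs]; split <;> omega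
    set X : ℤ → Bool := fun t =>
      if (t - j0) % 2 = 0 then false
      else if s ≤ t then seq1 (fun k => y (s + 2*k + 1)) ((t - s)/2).toNat
      else seq1 (fun k => y (s - 2*k - 1)) ((s - t)/2).toNat with hX
    have Xpar : ∀ t, (t - j0) % 2 = 0 → X t = false := by
      intro t ht
      show (if _ then _ else _) = false
      rw [if_pos ht]
    have Xs : X s = false := by
      show (if _ then _ else _) = false
      rw [if_neg (by omega), if_pos (le_refl _)]
      rw [show (s - s : ℤ) = 0 by ring]
      rfl
    have XR : ∀ t, s + 2 ≤ t → (t - j0) % 2 = 1 → X t = xor (X (t - 2)) (y (t - 1)) := by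
      intro t h1 h2
      show (if _ then _ else _) = _
      rw [if_neg (by omega), if_pos (by omega)]
      rw [show ((t - s)/2).toNat = ((t - 2 - s)/2).toNat + 1 by omega]
      show xor (seq1 _ ((t - 2 - s)/2).toNat) (y (s + 2 * (((t - 2 - s)/2).toNat : ℤ) + 1)) = _
      congr 1
      · show _ = (if _ then _ else _)
        rw [if_neg (by omega), if_pos (by omega)]
      · congr 1
        omega
    have XL : ∀ t, t ≤ s - 2 → (t - j0) % 2 = 1 → X t = xor (X (t + 2)) (y (t + 1)) := by
      intro t h1 h2
      show (if _ then _ else _) = _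
      rw [if_neg (by omega), if_neg (by omega)]
      rw [show ((s - t)/2).toNat = ((s - (t + 2))/2).toNat + 1 by omega]
      show xor (seq1 _ ((s - (t+2))/2).toNat) (y (s - 2 * (((s - (t+2))/2).toNat : ℤ) - 1)) = _
      congr 1
      · show _ = (if _ then _ else _)
        by_cases hc : s ≤ t + 2
        · have h2' : t + 2 = s := by omega
          rw [if_neg (by omega), if_pos (by omega), h2', show (s - s : ℤ) = 0 by ring]
          rfl
        · rw [if_neg (by omega), if_neg (by omega)]
      · congr 1
        omega
    have Xwin : ∀ d : ℕ, ∀ t, (t - s).toNat = d → p ≤ t → t < p + L → X t = false := by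
      intro d
      induction d using Nat.strong_induction_on with
      | _ d ih =>
        intro t hd h1 h2
        rcases Int.emod_two_eq_zero_or_one (t - j0) with hpar | hpar
        · exact Xpar t hpar
        · have hts : ¬ (t < s) := by omega
          by_cases hts2 : t = s
          · rw [hts2]; exact Xs
          · rw [XR t (by omega) hpar]
            rw [ih (t - 2 - s).toNat (by omega) (t - 2) rfl (by omega) (by omega)]
            rw [hMyat (t - 1) (by omega) (by omega)]
            rfl
    have hMX : Mw X w p := by
      intro j hj
      rw [Xwin (p + (j:ℤ) - s).toNat (p + j) rfl (by omega) (by omega), hall j hj]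
    have hfX : f18C X = y := by
      funext jj
      rw [f18C_at]
      rcases Int.emod_two_eq_zero_or_one (jj - j0) with hpar | hpar
      · rw [Xpar jj hpar, r18_mid_false]
        by_cases hjs : s + 1 ≤ jj
        · rw [XR (jj + 1) (by omega) (by omega),
            show jj + 1 - 2 = jj - 1 by ring, show jj + 1 - 1 = jj by ring]
          cases X (jj - 1) <;> cases y jj <;> rfl
        · rw [XL (jj - 1) (by omega) (by omega),
            show jj - 1 + 2 = jj + 1 by ring, show jj - 1 + 1 = jj by ring]
          cases X (jj + 1) <;> cases y jj <;> rfl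
      · rw [Xpar (jj - 1) (by omega), Xpar (jj + 1) (by omega), hyz jj hpar]
        cases X jj <;> rfl
    refine ⟨X, ⟨hMX, ?_, ?_⟩, hfX⟩
    · have hempty : {i : ℤ | kinkAtC X i} = ∅ := by
        ext i
        simp only [Set.mem_setOf_eq, Set.mem_empty_iff_false, iff_false]
        intro hi
        rw [kinkAtC_iff] at hi
        obtain ⟨c, h1, h2, h3, h4, _⟩ := hi
        rcases Int.emod_two_eq_zero_or_one (i - j0) with hp | hp
        · rw [Xpar i hp] at h3; exact absurd h3 (by simp)
        · rw [Xpar c (by omega)] at h4; exact absurd h4 (by simp)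
      rw [hempty]; exact Set.finite_empty
    · have hempty : {i : ℤ | kinkAtC X i} = ∅ := by
        ext i
        simp only [Set.mem_setOf_eq, Set.mem_empty_iff_false, iff_false]
        intro hi
        rw [kinkAtC_iff] at hi
        obtain ⟨c, h1, h2, h3, h4, _⟩ := hi
        rcases Int.emod_two_eq_zero_or_one (i - j0) with hp | hp
        · rw [Xpar i hp] at h3; exact absurd h3 (by simp)
        · rw [Xpar c (by omega)] at h4; exact absurd h4 (by simp)
      rw [hempty, Set.ncard_empty, kinkCount_zero hall]
  · push_neg at hy1
    have hyz : ∀ jj : ℤ, y jj = false := by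
      intro jj
      cases hyj : y jj with
      | false => rfl
      | true => exact absurd hyj (hy1 jj)
    refine ⟨fun _ => false, ⟨?_, ?_, ?_⟩, ?_⟩
    · intro j hj
      rw [hall j hj]
    · have hempty : {i : ℤ | kinkAtC (fun _ => false) i} = ∅ := by
        ext i
        simp only [Set.mem_setOf_eq, Set.mem_empty_iff_false, iff_false]
        intro hi
        rw [kinkAtC_iff] at hi
        obtain ⟨c, h1, h2, h3, h4, _⟩ := hi
        exact absurd h3 (by simp)
      rw [hempty]; exact Set.finite_empty
    · have hempty : {i : ℤ | kinkAtC (fun _ => false) i} = ∅ := by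
        ext i
        simp only [Set.mem_setOf_eq, Set.mem_empty_iff_false, iff_false]
        intro hi
        rw [kinkAtC_iff] at hi
        obtain ⟨c, h1, h2, h3, h4, _⟩ := hi
        exact absurd h3 (by simp)
      rw [hempty, Set.ncard_empty, kinkCount_zero hall]
    · funext jj
      rw [f18C_at, hyz jj]
      rfl

/-! ### Part 2 -/

lemma part2 {w : List Bool} (hlen : 3 ≤ w.length) (hw : stable w) (hsp : ¬ specialForm w)
    (p : ℤ) : extC (f18W w) (p + 1) ⊆ f18C '' extC w p := by
  intro y hy
  obtain ⟨hMy, hcfgy⟩ := hy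
  set L : ℤ := (w.length : ℤ) with hL
  by_cases hone : ∃ j, j < w.length ∧ w.getD j false = true
  swap
  · push_neg at hone
    have hall : ∀ j, j < w.length → w.getD j false = false := by
      intro j hj
      cases h : w.getD j false with
      | false => rfl
      | true => exact absurd h (hone j hj)
    exact zero_construct hlen hall hMy hcfgy
  · have hSL : ¬ leftUnstable w := fun h => hw (Or.inl h)
    have hSR : ¬ rightUnstable w := fun h => hw (Or.inr h)
    have hBy : ∀ a c, adjK y a c → p + 1 ≤ a ∧ c < p + 1 + (f18W w).length :=
      fun a c h => kinks_bounds hMy hcfgy h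
    obtain ⟨lam, hlaml, hlam, hlast⟩ := exists_last_one hone
    obtain ⟨gR, hMgR, hfR, hzR⟩ := right_construct hlen hSR hsp hlaml hlam hlast hMy hBy
    have hlenr : 3 ≤ w.reverse.length := by simpa using hlen
    have hSRr : ¬ rightUnstable w.reverse := fun h => hSL (LU_of_RU_reverse h)
    have hspr : ¬ specialForm w.reverse := fun h => hsp (specialForm_of_reverse h)
    have honer : ∃ j, j < w.reverse.length ∧ w.reverse.getD j false = true := by
      obtain ⟨j0, hj0, hj0t⟩ := hone
      refine ⟨w.length - 1 - j0, by simp; omega, ?_⟩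
      rw [getD_reverse (by omega), show w.length - 1 - (w.length - 1 - j0) = j0 by omega]
      exact hj0t
    obtain ⟨mu, hmul, hmu, hmulast⟩ := exists_last_one honer
    have hmul' : mu < w.length := by simpa using hmul
    have hvlen : ((f18W w).length : ℤ) = L - 2 := by rw [f18W_length]; push_cast; omega
    have hvrlen : ((f18W w.reverse).length : ℤ) = L - 2 := by
      rw [f18W_length, List.length_reverse]; push_cast; omega
    set pr : ℤ := -(p + L - 1) with hpr
    have hMyr : Mw (revC y) (f18W w.reverse) (pr + 1) := by
      have h0 := Mw_revC hMy
      rw [← f18W_reverse] at h0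
      have he : -(p + 1 + ((f18W w).length : ℤ) - 1) = pr + 1 := by rw [hvlen]; omega
      rwa [he] at h0
    have hByr : ∀ a c, adjK (revC y) a c →
        pr + 1 ≤ a ∧ c < pr + 1 + (f18W w.reverse).length := by
      intro a c h
      have h2 := hBy _ _ (adjK_revC.mp h)
      constructor
      · omega
      · omega
    obtain ⟨gL, hMgL, hfL, hzL⟩ := right_construct hlenr hSRr hspr hmul hmu hmulast hMyr hByr
    set XL : ℤ → Bool := revC gL with hXLdef
    set X : ℤ → Bool := fun t => if t < p then XL t else gR t with hXdef
    set lampos : ℤ := p + lam with hlampos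
    set pmu : ℤ := p + L - 1 - mu with hpmu
    have hXwin : ∀ t, p ≤ t → t < p + L → X t = w.getD (t - p).toNat false := by
      intro t h1 h2
      show (if t < p then _ else _) = _
      rw [if_neg (by omega)]
      exact Mw_at hMgR h1 (by omega)
    have hMX : Mw X w p := by
      intro j hj
      rw [hXwin (p + j) (by omega) (by omega)]
      congr 1
      omega
    have hXR : ∀ t, p ≤ t → X t = gR t := by
      intro t h
      show (if _ then _ else _) = _
      rw [if_neg (by omega)]
    have hXLa : ∀ t, t ≤ p + 1 → X t = XL t := by
      intro t h
      by_cases hc : t < p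
      · show (if _ then _ else _) = _
        rw [if_pos hc]
      · have e1 : gL (-t) = w.reverse.getD ((-t) - pr).toNat false :=
          Mw_at hMgL (by omega) (by rw [List.length_reverse]; omega)
        rw [getD_reverse (by omega)] at e1
        rw [hXwin t (by omega) (by omega)]
        show _ = gL (-t)
        rw [e1]
        congr 1
        omega
    have hzXL : ∀ t, t ≤ p + 1 → (t - pmu) % 2 = 1 → XL t = false := by
      intro t h1 h2
      show gL (-t) = false
      apply hzL
      · rw [List.length_reverse]; omega
      · omega
    have hXpmu : X pmu = true := by
      rw [getD_reverse (by omega)] at hmu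
      rw [hXwin pmu (by omega) (by omega),
        show (pmu - p).toNat = w.length - 1 - mu by omega]
      exact hmu
    have hXpre : ∀ t, p ≤ t → t < pmu → X t = false := by
      intro t h1 h2
      rw [hXwin t h1 (by omega)]
      rw [getD_reverse' (by omega : (t - p).toNat < w.length)]
      apply hmulast
      · omega
      · rw [List.length_reverse]; omega
    have hXlam : X lampos = true := by
      rw [hXwin lampos (by omega) (by omega), show (lampos - p).toNat = lam by omega]
      exact hlam
    have hBX : ∀ a c, adjK X a c → p ≤ a ∧ c < p + L := by
      intro a c hadj
      obtain ⟨h1, h2, h3, h4, h5⟩ := hadj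
      have hcb : c < p + L := by
        by_contra hcge
        push_neg at hcge
        have hcpar : (c - lampos) % 2 = 0 := by
          by_contra hp
          rw [hXR c (by omega), hzR c (by omega) (by omega)] at h4
          exact absurd h4 (by simp)
        have hapar : (a - lampos) % 2 = 1 := by omega
        by_cases hae : p + L - 2 ≤ a
        · rw [hXR a (by omega), hzR a (by omega) (by omega)] at h3
          exact absurd h3 (by simp)
        · rcases lt_trichotomy a lampos with hal | hal | hal
          · have h0 := h5 lampos (by omega) (by omega)
            rw [hXlam] at h0
            exact absurd h0 (by simp)
          · omega
          · rw [hXwin a (by omega) (by omega)] at h3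
            rw [hlast (a - p).toNat (by omega) (by omega)] at h3
            exact absurd h3 (by simp)
      refine ⟨?_, hcb⟩
      by_contra hap
      push_neg at hap
      have hapar : (a - pmu) % 2 = 0 := by
        by_contra hp
        rw [hXLa a (by omega), hzXL a (by omega) (by omega)] at h3
        exact absurd h3 (by simp)
      have hcpar : (c - pmu) % 2 = 1 := by omega
      rcases lt_trichotomy c pmu with hcl | hcl | hcl
      · by_cases hcp : c ≤ p + 1
        · rw [hXLa c (by omega), hzXL c hcp hcpar] at h4
          exact absurd h4 (by simp)
        · rw [hXpre c (by omega) hcl] at h4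
          exact absurd h4 (by simp)
      · omega
      · have h0 := h5 pmu (by omega) (by omega)
        rw [hXpmu] at h0
        exact absurd h0 (by simp)
    have hfX : f18C X = y := by
      funext j
      by_cases hj1 : p + L - 1 ≤ j
      · rw [locality (x2 := gR) (hXR _ (by omega)) (hXR _ (by omega)) (hXR _ (by omega))]
        exact hfR j (by omega)
      by_cases hj2 : j ≤ p
      · rw [locality (x2 := XL) (hXLa _ (by omega)) (hXLa _ (by omega)) (hXLa _ (by omega))]
        have e0 : f18C XL j = f18C gL (-j) := by
          rw [hXLdef, f18C_revC]
          rfl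
        rw [e0, hfL (-j) (by rw [List.length_reverse]; omega)]
        show y (-(-j)) = y j
        rw [neg_neg]
      · push_neg at hj1 hj2
        rw [locality (x2 := gR) (hXR _ (by omega)) (hXR _ (by omega)) (hXR _ (by omega))]
        have h1 := Mw_at (Mw_image hMgR) (t := j) (by omega) (by omega)
        have h2 := Mw_at hMy (t := j) (by omega) (by omega)
        rw [h1, ← h2]
    have hsetX : {i : ℤ | kinkAtC X i} = (fun j : ℕ => p + (j : ℤ)) '' {i : ℕ | kinkAtW w i} := by
      ext q
      simp only [Set.mem_setOf_eq, Set.mem_image]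
      constructor
      · intro hq
        rw [kinkAtC_iff] at hq
        obtain ⟨c, hc⟩ := hq
        obtain ⟨hqa, hqc⟩ := hBX _ _ hc
        have hwadj := adjK_to_wAdj hMX hc hqa (by omega)
        exact ⟨(q - p).toNat, (kinkAtW_iff _ _).mpr ⟨_, hwadj⟩, by omega⟩
      · rintro ⟨j, hj, rfl⟩
        rw [kinkAtW_iff] at hj
        obtain ⟨c, hc⟩ := hj
        exact (kinkAtC_iff _ _).mpr ⟨_, wAdj_to_adjK hMX hc⟩
    have hinj : Function.Injective (fun j : ℕ => p + (j : ℤ)) := fun u v h => by simpa using h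
    refine ⟨X, ⟨hMX, ?_, ?_⟩, hfX⟩
    · rw [hsetX]
      exact (KW_finite _).image _
    · rw [hsetX, Set.ncard_image_of_injective _ hinj]
      rfl

/-- For a stable word `w`, `f(Σ̃(w,p)) ⊆ Σ̃(f(w), p+1)`, with equality when `w` is
not of the form `0^α (10)^n 1^β`. -/
theorem f18C_extC (w : List Bool) (hlen : 3 ≤ w.length) (hw : stable w) (p : ℤ) :
    f18C '' extC w p ⊆ extC (f18W w) (p + 1) ∧
    (¬ specialForm w → f18C '' extC w p = extC (f18W w) (p + 1)) := by
  refine ⟨part1 hlen hw p, fun hsp => ?_⟩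
  exact Set.Subset.antisymm (part1 hlen hw p) (part2 hlen hw hsp p)
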